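/- arXiv:2503.08287 — 2 statements merged into one kernel-verified Lean document; each statement's English description precedes it below -/
import Mathlib

section
/- The function h_2^I(t) = −√(κΦ)(ζe^{γ(T−t)}+e^{−γ(T−t)})/(ζe^{γ(T−t)}−e^{−γ(T−t)}) is monotonically nonincreasing in t on [0,T] when ζ > 1 and γ, κ, Φ > 0. -/
theorem stmt_9 (T κ Φ γ ζ : ℝ) (hκ : 0 < κ) (hΦ : 0 < Φ) (hγ : 0 < γ) (hζ : 1 < ζ)
    (h : ℝ → ℝ)
    (hdef : ∀ t, h t = -Real.sqrt (κ * Φ) *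
      (ζ * Real.exp (γ * (T - t)) + Real.exp (-γ * (T - t))) /
      (ζ * Real.exp (γ * (T - t)) - Real.exp (-γ * (T - t)))) :
    AntitoneOn h (Set.Icc 0 T) := by
  intro s hs t ht hst
  rw [hdef s, hdef t]
  have c0 : (0:ℝ) ≤ Real.sqrt (κ * Φ) := Real.sqrt_nonneg _
  set a := Real.exp (γ * (T - t)) with ha
  set b := Real.exp (γ * (T - s)) with hb
  have ea : Real.exp (-γ * (T - t)) = a⁻¹ := by
    rw [ha, ← Real.exp_neg]; ring_nf
  have eb : Real.exp (-γ * (T - s)) = b⁻¹ := by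
    rw [hb, ← Real.exp_neg]; ring_nf
  have ha0 : 0 < a := Real.exp_pos _
  have hb0 : 0 < b := Real.exp_pos _
  have ha1 : 1 ≤ a := Real.one_le_exp (by nlinarith [ht.2])
  have hab : a ≤ b := Real.exp_le_exp.2 (by nlinarith)
  have hDa : 0 < ζ * a - a⁻¹ := by
    have : a⁻¹ ≤ 1 := inv_le_one_of_one_le₀ ha1
    nlinarith
  have hDb : 0 < ζ * b - b⁻¹ := by
    have : b⁻¹ ≤ 1 := inv_le_one_of_one_le₀ (le_trans ha1 hab)
    nlinarith
  rw [ea, eb, div_le_div_iff₀ hDa hDb]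
  have hai : a * a⁻¹ = 1 := mul_inv_cancel₀ ha0.ne'
  have hbi : b * b⁻¹ = 1 := mul_inv_cancel₀ hb0.ne'
  have key : a * b⁻¹ ≤ b * a⁻¹ := by
    rw [← div_eq_mul_inv, ← div_eq_mul_inv, div_le_div_iff₀ hb0 ha0]
    nlinarith
  nlinarith [mul_nonneg c0 (sub_nonneg.2 key), mul_pos ha0 hb0]
end

section
/- For all t ∈ [0,T], |h_2^I(t)| ≥ √(κΦ), with equality only in the limit T − t → ∞; i.e., √(κΦ) ≤ −h_2^I(t) ≤ a_I when a_I > √(κΦ). -/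
theorem stmt_10 (T κ Φ aI γ ζ : ℝ) (hκ : 0 < κ) (hΦ : 0 < Φ)
    (ha : Real.sqrt (κ * Φ) < aI) (hγ : γ = Real.sqrt (Φ / κ))
    (hζ : ζ = (aI + Real.sqrt (κ * Φ)) / (aI - Real.sqrt (κ * Φ)))
    (h : ℝ → ℝ)
    (hdef : ∀ t, h t = -Real.sqrt (κ * Φ) *
      (ζ * Real.exp (γ * (T - t)) + Real.exp (-γ * (T - t))) /
      (ζ * Real.exp (γ * (T - t)) - Real.exp (-γ * (T - t)))) :
    ∀ t ∈ Set.Icc (0 : ℝ) T, Real.sqrt (κ * Φ) ≤ -h t ∧ -h t ≤ aI := by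
  intro t ht
  obtain ⟨ht0, htT⟩ := ht
  set s : ℝ := Real.sqrt (κ * Φ) with hs
  have hspos : 0 < s := Real.sqrt_pos.mpr (mul_pos hκ hΦ)
  have has : 0 < aI - s := by linarith
  have hζeq : (aI - s) * ζ = aI + s := by
    rw [hζ]; field_simp
  have hζ1 : 1 < ζ := by
    rw [hζ, lt_div_iff₀ has]; linarith
  have hγ0 : 0 ≤ γ := hγ ▸ Real.sqrt_nonneg _
  have hu : 0 ≤ T - t := by linarith
  set E : ℝ := Real.exp (γ * (T - t)) with hE
  set e : ℝ := Real.exp (-γ * (T - t)) with he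
  have hEpos : 0 < E := Real.exp_pos _
  have hepos : 0 < e := Real.exp_pos _
  have heE : e ≤ E := by
    apply Real.exp_le_exp.mpr
    nlinarith
  have hD : 0 < ζ * E - e := by nlinarith
  have hval : -h t = s * (ζ * E + e) / (ζ * E - e) := by
    rw [hdef t]; ring
  rw [hval]
  constructor
  · rw [le_div_iff₀ hD]
    nlinarith
  · rw [div_le_iff₀ hD]
    nlinarith [mul_le_mul_of_nonneg_left heE (by linarith : (0:ℝ) ≤ aI + s)]
end
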